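/- Restricted to the invariant line y = x/2, the nonlinear system reduces to the one-dimensional ODE dx/dt = λ₁·x·(μ + 1 − (2μ + 3)x), whose unique positive equilibrium x_c = (μ+1)/(2μ+3) attracts every solution with initial condition x(0) ∈ [1/3, 1/2] (the x-range of L₁ ∩ Q). -/

import Mathlib

open Filter Real Set

lemma logistic_alg (a c x0 e d : ℝ) (hc : c ≠ 0) (hd : d ≠ 0)
    (hde : x0 + (c - x0) * e = d) :
    a * (c * x0 / d) * (1 - c * x0 / d / c) = (0 * d - c * x0 * ((c - x0) * (e * -a))) / d ^ 2 := by
  field_simp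
  subst hde
  ring

lemma logistic_conv (a c : ℝ) (ha : 0 < a) (hc : 0 < c) (x : ℝ → ℝ)
    (hx' : ∀ t, HasDerivAt x (a * x t * (1 - x t / c)) t) (hx0 : 0 < x 0) :
    Tendsto x atTop (nhds c) := by
  set x0 := x 0 with hx0def
  set D : ℝ → ℝ := fun t => x0 + (c - x0) * Real.exp (-a * t) with hD
  set φ : ℝ → ℝ := fun t => c * x0 / D t with hφ
  have hDpos : ∀ t, 0 ≤ t → 0 < D t := by
    intro t ht
    have he1 : Real.exp (-a * t) ≤ 1 := by
      apply Real.exp_le_one_iff.mpr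
      nlinarith
    have he0 : 0 < Real.exp (-a * t) := Real.exp_pos _
    simp only [hD]
    nlinarith
  -- derivative of D
  have hD' : ∀ t, HasDerivAt D ((c - x0) * (Real.exp (-a * t) * (-a))) t := by
    intro t
    have h1 : HasDerivAt (fun t : ℝ => -a * t) (-a) t := by
      simpa using (hasDerivAt_id t).const_mul (-a)
    exact (h1.exp.const_mul (c - x0)).const_add x0
  -- derivative of φ
  have hφ' : ∀ t, 0 ≤ t → HasDerivAt φ (a * φ t * (1 - φ t / c)) t := by
    intro t ht
    have hDne : D t ≠ 0 := (hDpos t ht).ne'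
    have h : HasDerivAt φ _ t := (hasDerivAt_const t (c * x0)).div (hD' t) hDne
    convert h using 1
    have hDval : x0 + (c - x0) * Real.exp (-a * t) = D t := rfl
    simpa using logistic_alg a c x0 (Real.exp (-a * t)) (D t) hc.ne' hDne hDval
  have hφ0 : φ 0 = x 0 := by
    simp only [hφ, hD]
    norm_num
    field_simp
    exact hx0def
  -- uniqueness on [0, T]
  have key : ∀ T, 0 ≤ T → x T = φ T := by
    intro T hT
    have hxc : ContinuousOn x (Icc 0 T) := fun t _ => (hx' t).continuousAt.continuousWithinAt
    have hφc : ContinuousOn φ (Icc 0 T) := fun t ht => (hφ' t ht.1).continuousAt.continuousWithinAt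
    obtain ⟨Cx, hCx⟩ := isCompact_Icc.exists_bound_of_continuousOn hxc
    obtain ⟨Cφ, hCφ⟩ := isCompact_Icc.exists_bound_of_continuousOn hφc
    set M : ℝ := max Cx Cφ with hM
    have hM0 : 0 ≤ M := le_trans (norm_nonneg (x 0)) (le_trans (hCx 0 ⟨le_refl 0, hT⟩) (le_max_left _ _))
    set K0 : ℝ := a + a * (2 * M) / c with hK0
    have hK00 : 0 ≤ K0 := by positivity
    have hlip : ∀ t : ℝ, LipschitzOnWith K0.toNNReal (fun u => a * u * (1 - u / c)) (Icc (-M) M) := by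
      intro t
      rw [lipschitzOnWith_iff_dist_le_mul]
      intro u hu w hw
      rw [Real.dist_eq, Real.dist_eq]
      have habs : |a * u * (1 - u / c) - a * w * (1 - w / c)| = |a - a * (u + w) / c| * |u - w| := by
        rw [← abs_mul]
        congr 1
        field_simp
        ring
      rw [habs]
      have h1 : |a - a * (u + w) / c| ≤ K0 := by
        have hu1 : |u| ≤ M := abs_le.mpr ⟨by linarith [hu.1], hu.2⟩
        have hw1 : |w| ≤ M := abs_le.mpr ⟨by linarith [hw.1], hw.2⟩
        have hstep : |a - a * (u + w) / c| ≤ |a| + |a * (u + w) / c| := abs_sub _ _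
        have h2 : |a * (u + w) / c| = a * |u + w| / c := by
          rw [abs_div, abs_mul, abs_of_pos ha, abs_of_pos hc]
        have h3 : |u + w| ≤ 2 * M := le_trans (abs_add_le _ _) (by linarith)
        have h4 : a * |u + w| / c ≤ a * (2 * M) / c := by
          gcongr
        rw [h2] at hstep
        rw [abs_of_pos ha] at hstep
        linarith
      calc |a - a * (u + w) / c| * |u - w| ≤ K0 * |u - w| := by
            apply mul_le_mul_of_nonneg_right h1 (abs_nonneg _)
        _ = (K0.toNNReal : ℝ) * |u - w| := by rw [Real.coe_toNNReal _ hK00]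
    have := ODE_solution_unique_of_mem_Icc_right (v := fun _ u => a * u * (1 - u / c))
      (s := fun _ => Icc (-M) M) (fun t _ => hlip t) hxc
      (fun t ht => (hx' t).hasDerivWithinAt)
      (fun t ht => by
        have := hCx t ⟨ht.1, ht.2.le⟩
        rw [Real.norm_eq_abs, abs_le] at this
        exact ⟨by linarith [le_max_left Cx Cφ], by linarith [le_max_left Cx Cφ]⟩)
      hφc
      (fun t ht => (hφ' t ht.1).hasDerivWithinAt)
      (fun t ht => by
        have := hCφ t ⟨ht.1, ht.2.le⟩
        rw [Real.norm_eq_abs, abs_le] at this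
        exact ⟨by linarith [le_max_right Cx Cφ], by linarith [le_max_right Cx Cφ]⟩)
      hφ0.symm
    exact this ⟨hT, le_refl T⟩
  -- limit of φ
  have hφlim : Tendsto φ atTop (nhds c) := by
    have h1 : Tendsto (fun t : ℝ => -a * t) atTop atBot := by
      exact tendsto_id.const_mul_atTop_of_neg (by linarith)
    have h2 : Tendsto (fun t : ℝ => Real.exp (-a * t)) atTop (nhds 0) :=
      Real.tendsto_exp_atBot.comp h1
    have h3 : Tendsto D atTop (nhds x0) := by
      have hmul : Tendsto (fun t : ℝ => (c - x0) * Real.exp (-a * t)) atTop (nhds ((c - x0) * 0)) :=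
        (tendsto_const_nhds (x := c - x0) (f := atTop)).mul h2
      have := (tendsto_const_nhds (x := x0) (f := atTop)).add hmul
      simpa only [mul_zero, add_zero] using this
    have h4 : Tendsto φ atTop (nhds (c * x0 / x0)) :=
      tendsto_const_nhds.div h3 hx0.ne'
    rwa [mul_div_assoc, div_self hx0.ne', mul_one] at h4
  have heq : φ =ᶠ[atTop] x := (eventually_ge_atTop 0).mono (fun t ht => (key t ht).symm)
  exact hφlim.congr' heq

/-- Restricted to the invariant line `y = x/2`, the nonlinear system reduces to
`dx/dt = λ₁x(μ + 1 − (2μ+3)x)`, whose positive equilibrium `x_c = (μ+1)/(2μ+3)`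
attracts every solution starting in `[1/3, 1/2]`. -/
theorem restricted_dynamics (lam mu : ℝ) (hlam : 0 < lam) (hmu : 0 < mu)
    (f : ℝ → ℝ → ℝ)
    (hf : ∀ x y, f x y = lam * (2 * mu * y - 4 * mu * x * y - 2 * x ^ 2 - 2 * x * y + x)) :
    (∀ x : ℝ, f x (x / 2) = lam * x * (mu + 1 - (2 * mu + 3) * x)) ∧
    (∀ x : ℝ → ℝ,
      (∀ t, HasDerivAt x (lam * x t * (mu + 1 - (2 * mu + 3) * x t)) t) →
      x 0 ∈ Set.Icc (1 / 3 : ℝ) (1 / 2) →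
      Tendsto x atTop (nhds ((mu + 1) / (2 * mu + 3)))) := by
  constructor
  · intro x
    rw [hf]
    ring
  · intro x hx' hx0
    have hmu1 : (0:ℝ) < mu + 1 := by linarith
    have h23 : (0:ℝ) < 2 * mu + 3 := by linarith
    have ha : 0 < lam * (mu + 1) := by positivity
    have hc : 0 < (mu + 1) / (2 * mu + 3) := by positivity
    apply logistic_conv (lam * (mu + 1)) ((mu + 1) / (2 * mu + 3)) ha hc x ?_ ?_
    · intro t
      have h := hx' t
      convert h using 1
      field_simp
    · have := hx0.1
      linarith
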